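/- Let A be an abelian category and let (L, F) be an object of the homotopy category of finitely filtered cochain complexes in A. Define the shifted filtration Dec(F). Then the assignment (L,F) ↦ (L, Dec(F)) is functorial and sends filtered quasi-isomorphisms to filtered quasi-isomorphisms; more precisely, if φ : (L,F) → (M,F) induces isomorphisms on all E_1-terms E_1^{p,q} = H^{p+q}(Gr^p_F), then φ induces isomorphisms on all H^r(Gr^p_{Dec(F)}). -/

import Mathlib

set_option linter.unusedVariables false


/-! Basic theory of cochain complexes of abelian groups, indexed by `ℤ`,
with subcomplexes, quotient complexes, cohomology and induced maps. -/

/-- A cochain complex of abelian groups indexed by `ℤ`. -/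
structure Cochain : Type 1 where
  X : ℤ → Type
  inst : ∀ l, AddCommGroup (X l)
  d : ∀ l, X l →+ X (l + 1)
  dd : ∀ l (x : X l), d (l + 1) (d l x) = 0

attribute [instance] Cochain.inst

namespace Cochain

variable (L M : Cochain)

/-- Transport along an equality of degrees. -/
def castAdd {a b : ℤ} (h : a = b) : L.X a ≃+ L.X b := by
  subst h; exact AddEquiv.refl _

@[simp] theorem castAdd_rfl {a : ℤ} (x : L.X a) : L.castAdd rfl x = x := rfl

/-- Cocycles in degree `l`. -/
def cocycles (l : ℤ) : AddSubgroup (L.X l) := (L.d l).ker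

/-- Coboundaries in degree `l`. -/
def bdry (l : ℤ) : AddSubgroup (L.X l) :=
  ((L.castAdd (show l - 1 + 1 = l by ring)).toAddMonoidHom.comp (L.d (l - 1))).range

/-- Cohomology in degree `l`: cocycles modulo coboundaries. -/
abbrev H (l : ℤ) : Type := ↥(L.cocycles l) ⧸ (L.bdry l).addSubgroupOf (L.cocycles l)

/-- The projection from cocycles onto cohomology. -/
abbrev Hmk (l : ℤ) : ↥(L.cocycles l) →+ L.H l := QuotientAddGroup.mk' _

/-- A morphism of cochain complexes. -/
structure Hom (L M : Cochain) where
  f : ∀ l, L.X l →+ M.X l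
  comm : ∀ l (x : L.X l), f (l + 1) (L.d l x) = M.d l (f l x)

variable {L M}

theorem Hom.cast_natural (φ : Hom L M) {a b : ℤ} (h : a = b) (x : L.X a) :
    φ.f b (L.castAdd h x) = M.castAdd h (φ.f a x) := by subst h; rfl

theorem mem_bdry_map (φ : Hom L M) (l : ℤ) {x : L.X l} (hx : x ∈ L.bdry l) :
    φ.f l x ∈ M.bdry l := by
  obtain ⟨y, hy⟩ := hx
  refine ⟨φ.f (l - 1) y, ?_⟩
  simp only [AddMonoidHom.comp_apply, AddEquiv.coe_toAddMonoidHom] at hy ⊢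
  rw [← hy, φ.cast_natural, φ.comm]

/-- The map induced on cocycles by a morphism of complexes. -/
def Hom.cocyclesMap (φ : Hom L M) (l : ℤ) : ↥(L.cocycles l) →+ ↥(M.cocycles l) :=
  AddMonoidHom.codRestrict ((φ.f l).domRestrict (L.cocycles l)) (M.cocycles l) (fun x => by
    have hx : L.d l x.1 = 0 := x.2
    show M.d l (φ.f l x.1) = 0
    rw [← φ.comm l x.1, hx, map_zero])

/-- The map induced on cohomology by a morphism of complexes. -/
def Hom.Hmap (φ : Hom L M) (l : ℤ) : L.H l →+ M.H l :=
  QuotientAddGroup.lift _ ((M.Hmk l).comp (φ.cocyclesMap l)) (fun x hx => by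
    have hx' : (x : L.X l) ∈ L.bdry l := AddSubgroup.mem_addSubgroupOf.mp hx
    have : (φ.cocyclesMap l x : M.X l) ∈ M.bdry l := mem_bdry_map φ l hx'
    simpa using (QuotientAddGroup.eq_zero_iff _).2 (AddSubgroup.mem_addSubgroupOf.mpr this))

variable (L)

/-- A family of subgroups is a subcomplex if it is stable under the differential. -/
def IsSubcomplex (S : ∀ l, AddSubgroup (L.X l)) : Prop :=
  ∀ l, ∀ x ∈ S l, L.d l x ∈ S (l + 1)

/-- The subcomplex determined by a `d`-stable family of subgroups. -/
def sub (S : ∀ l, AddSubgroup (L.X l)) (hS : L.IsSubcomplex S) : Cochain where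
  X l := S l
  inst l := inferInstance
  d l := AddMonoidHom.codRestrict ((L.d l).domRestrict (S l)) (S (l + 1))
    (fun x => hS l x.1 x.2)
  dd l x := Subtype.ext (L.dd l x.1)

/-- The inclusion of a subcomplex. -/
def subIncl (S : ∀ l, AddSubgroup (L.X l)) (hS : L.IsSubcomplex S) :
    Hom (L.sub S hS) L where
  f l := (S l).subtype
  comm _ _ := rfl

/-- The quotient complex by a subcomplex. -/
def quot (S : ∀ l, AddSubgroup (L.X l)) (hS : L.IsSubcomplex S) : Cochain where
  X l := L.X l ⧸ S l
  inst l := inferInstance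
  d l := QuotientAddGroup.lift (S l) ((QuotientAddGroup.mk' (S (l + 1))).comp (L.d l))
    (fun x hx => by simpa using (QuotientAddGroup.eq_zero_iff _).2 (hS l x hx))
  dd l x := QuotientAddGroup.induction_on x (fun y => by
    simp only [QuotientAddGroup.lift_mk, AddMonoidHom.comp_apply,
      QuotientAddGroup.mk'_apply, QuotientAddGroup.lift_mk, L.dd]
    rfl)

/-- The projection onto a quotient complex. -/
def quotHom (S : ∀ l, AddSubgroup (L.X l)) (hS : L.IsSubcomplex S) :
    Hom L (L.quot S hS) where
  f l := QuotientAddGroup.mk' (S l)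
  comm l x := by
    simp only [quot, QuotientAddGroup.mk'_apply, QuotientAddGroup.lift_mk,
      AddMonoidHom.comp_apply]
    rfl

/-- The filtration induced on cohomology by a subcomplex: the image of
`H^l(S) → H^l(L)`. -/
def imageInH (S : ∀ l, AddSubgroup (L.X l)) (hS : L.IsSubcomplex S) (l : ℤ) :
    AddSubgroup (L.H l) :=
  ((L.subIncl S hS).Hmap l).range

variable {L}

/-- Restriction of a morphism of complexes to subcomplexes. -/
def Hom.restrictHom (φ : Hom L M) (S : ∀ l, AddSubgroup (L.X l))
    (T : ∀ l, AddSubgroup (M.X l)) (hS : L.IsSubcomplex S) (hT : M.IsSubcomplex T)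
    (h : ∀ l, ∀ x ∈ S l, φ.f l x ∈ T l) :
    Hom (L.sub S hS) (M.sub T hT) where
  f l := AddMonoidHom.codRestrict ((φ.f l).domRestrict (S l)) (T l) (fun x => h l x.1 x.2)
  comm l x := Subtype.ext (φ.comm l x.1)

/-- Descent of a morphism of complexes to quotient complexes. -/
def Hom.descendHom (φ : Hom L M) (S : ∀ l, AddSubgroup (L.X l))
    (T : ∀ l, AddSubgroup (M.X l)) (hS : L.IsSubcomplex S) (hT : M.IsSubcomplex T)
    (h : ∀ l, ∀ x ∈ S l, φ.f l x ∈ T l) :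
    Hom (L.quot S hS) (M.quot T hT) where
  f l := QuotientAddGroup.map (S l) (T l) (φ.f l) (fun x hx => h l x hx)
  comm l x := QuotientAddGroup.induction_on x (fun y => by
    simp only [quot, QuotientAddGroup.lift_mk, QuotientAddGroup.map_mk,
      QuotientAddGroup.mk'_apply, AddMonoidHom.comp_apply, φ.comm]
    exact congrArg (QuotientAddGroup.mk' (T (l + 1))) (φ.comm l y))

end Cochain
namespace Cochain

variable (L M : Cochain)

theorem IsSubcomplex.inf {L : Cochain} {S T : ∀ l, AddSubgroup (L.X l)}
    (hS : L.IsSubcomplex S) (hT : L.IsSubcomplex T) :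
    L.IsSubcomplex (fun l => S l ⊓ T l) := fun l x hx =>
  AddSubgroup.mem_inf.2 ⟨hS l x (AddSubgroup.mem_inf.1 hx).1, hT l x (AddSubgroup.mem_inf.1 hx).2⟩

theorem IsSubcomplex.sup {L : Cochain} {S T : ∀ l, AddSubgroup (L.X l)}
    (hS : L.IsSubcomplex S) (hT : L.IsSubcomplex T) :
    L.IsSubcomplex (fun l => S l ⊔ T l) := by
  intro l x hx
  rw [AddSubgroup.mem_sup] at hx ⊢
  obtain ⟨y, hy, z, hz, rfl⟩ := hx
  exact ⟨L.d l y, hS l y hy, L.d l z, hT l z hz, (map_add _ _ _).symm⟩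

theorem ker_isSubcomplex {L M : Cochain} (φ : Hom L M) :
    L.IsSubcomplex (fun l => (φ.f l).ker) := by
  intro l x hx
  rw [AddMonoidHom.mem_ker] at hx ⊢
  rw [φ.comm l x, hx, map_zero]

/-- The graded piece `S/T` of two nested subcomplexes, as a cochain complex. -/
def GrCochain (L : Cochain) (S T : ∀ l, AddSubgroup (L.X l)) (hS : L.IsSubcomplex S)
    (hT : L.IsSubcomplex T) (_hle : ∀ l, T l ≤ S l) : Cochain :=
  (L.sub S hS).quot (fun l => (T l).addSubgroupOf (S l)) (fun l x hx =>
    AddSubgroup.mem_addSubgroupOf.2 (hT l x.1 (AddSubgroup.mem_addSubgroupOf.1 hx)))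

/-- The morphism induced on graded pieces by a filtered morphism of complexes. -/
def Hom.grHom {L M : Cochain} (φ : Hom L M) (S T : ∀ l, AddSubgroup (L.X l))
    (S' T' : ∀ l, AddSubgroup (M.X l)) (hS : L.IsSubcomplex S) (hT : L.IsSubcomplex T)
    (hS' : M.IsSubcomplex S') (hT' : M.IsSubcomplex T')
    (hle : ∀ l, T l ≤ S l) (hle' : ∀ l, T' l ≤ S' l)
    (h1 : ∀ l, ∀ x ∈ S l, φ.f l x ∈ S' l) (h2 : ∀ l, ∀ x ∈ T l, φ.f l x ∈ T' l) :
    Hom (GrCochain L S T hS hT hle) (GrCochain M S' T' hS' hT' hle') :=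
  (φ.restrictHom S S' hS hS' h1).descendHom _ _ _ _
    (fun l x hx => AddSubgroup.mem_addSubgroupOf.2
      (h2 l x.1 (AddSubgroup.mem_addSubgroupOf.1 hx)))

/-- The shifted (décalée) filtration `Dec(F)`:
`Dec(F)^p L^l = { x ∈ F^{p+l} L^l : d x ∈ F^{p+l+1} L^{l+1} }`. -/
def decF (L : Cochain) (F : ℤ → ∀ l, AddSubgroup (L.X l)) (p l : ℤ) :
    AddSubgroup (L.X l) :=
  F (p + l) l ⊓ (F (p + l + 1) (l + 1)).comap (L.d l)

theorem decF_isSubcomplex (L : Cochain) (F : ℤ → ∀ l, AddSubgroup (L.X l)) (p : ℤ) :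
    L.IsSubcomplex (fun l => decF L F p l) := by
  intro l x hx
  simp only [decF, AddSubgroup.mem_inf, AddSubgroup.mem_comap] at hx ⊢
  refine ⟨?_, ?_⟩
  · have h : p + (l + 1) = p + l + 1 := by ring
    rw [h]
    exact hx.2
  · rw [L.dd]
    exact zero_mem _

theorem decF_mono (L : Cochain) (F : ℤ → ∀ l, AddSubgroup (L.X l))
    (hdec : ∀ p l, F (p + 1) l ≤ F p l) (p l : ℤ) :
    decF L F (p + 1) l ≤ decF L F p l := by
  intro x hx
  simp only [decF, AddSubgroup.mem_inf, AddSubgroup.mem_comap] at hx ⊢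
  have e1 : p + 1 + l = p + l + 1 := by ring
  rw [e1] at hx
  exact ⟨hdec (p + l) l hx.1, hdec (p + l + 1) (l + 1) hx.2⟩

/-- The iterated graded piece `Gr^a_F Gr^b_G L`, as a cochain complex:
`(F^a ∩ G^b) / (F^{a+1} ∩ G^b + F^a ∩ G^{b+1})`. -/
def GrGrCochain (L : Cochain) (F G : ℤ → ∀ l, AddSubgroup (L.X l))
    (hFsub : ∀ p, L.IsSubcomplex (F p)) (hGsub : ∀ p, L.IsSubcomplex (G p))
    (hFdec : ∀ p l, F (p + 1) l ≤ F p l) (hGdec : ∀ p l, G (p + 1) l ≤ G p l)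
    (a b : ℤ) : Cochain :=
  GrCochain L (fun l => F a l ⊓ G b l)
    (fun l => (F (a + 1) l ⊓ G b l) ⊔ (F a l ⊓ G (b + 1) l))
    (IsSubcomplex.inf (hFsub a) (hGsub b))
    (IsSubcomplex.sup (IsSubcomplex.inf (hFsub (a + 1)) (hGsub b))
      (IsSubcomplex.inf (hFsub a) (hGsub (b + 1))))
    (fun l => sup_le (inf_le_inf_right _ (hFdec a l)) (inf_le_inf_left _ (hGdec b l)))

end Cochain

open Cochain in
theorem decF_compat {L M : Cochain} (φ : Cochain.Hom L M)
    (F : ℤ → ∀ l, AddSubgroup (L.X l)) (F' : ℤ → ∀ l, AddSubgroup (M.X l))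
    (hc : ∀ p l, ∀ x ∈ F p l, φ.f l x ∈ F' p l) (p : ℤ) :
    ∀ l, ∀ x ∈ decF L F p l, φ.f l x ∈ decF M F' p l := by
  intro l x hx
  simp only [decF, AddSubgroup.mem_inf, AddSubgroup.mem_comap] at hx ⊢
  refine ⟨hc _ _ _ hx.1, ?_⟩
  rw [← φ.comm]
  exact hc _ _ _ hx.2


/-! ### Auxiliary lemmas for the proof of Statement 15 -/

namespace Cochain
section GrLemmas

variable {L M : Cochain}

theorem castAdd_mem {S : ∀ l, AddSubgroup (L.X l)} {a b : ℤ} (h : a = b) {x : L.X a} :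
    L.castAdd h x ∈ S b ↔ x ∈ S a := by subst h; rfl

theorem d_castAdd {a b : ℤ} (h : a = b) (x : L.X a) :
    L.d b (L.castAdd h x) = L.castAdd (by rw [h]) (L.d a x) := by subst h; rfl

variable (S T : ∀ l, AddSubgroup (L.X l))
  (hS : L.IsSubcomplex S) (hT : L.IsSubcomplex T) (hle : ∀ l, T l ≤ S l)

theorem gr_d_mk (l : ℤ) (x : L.X l) (hx : x ∈ S l) :
    (GrCochain L S T hS hT hle).d l (QuotientAddGroup.mk (⟨x, hx⟩ : (L.sub S hS).X l)) =
      QuotientAddGroup.mk (⟨L.d l x, hS l x hx⟩ : (L.sub S hS).X (l + 1)) := rfl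

theorem gr_mk_eq_zero (l : ℤ) (x : L.X l) (hx : x ∈ S l) :
    (QuotientAddGroup.mk (⟨x, hx⟩ : (L.sub S hS).X l) : (GrCochain L S T hS hT hle).X l) =
      (0 : (GrCochain L S T hS hT hle).X l) ↔ x ∈ T l := by
  exact (QuotientAddGroup.eq_zero_iff (N := (T l).addSubgroupOf (S l)) (⟨x, hx⟩ : ↥(S l))).trans
    AddSubgroup.mem_addSubgroupOf

/-- The cohomology class of a relative cocycle. -/
def grcls (l : ℤ) (x : L.X l) (hx : x ∈ S l) (hdx : L.d l x ∈ T (l + 1)) :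
    (GrCochain L S T hS hT hle).H l :=
  (GrCochain L S T hS hT hle).Hmk l
    ⟨QuotientAddGroup.mk (⟨x, hx⟩ : (L.sub S hS).X l), by
      show (GrCochain L S T hS hT hle).d l _ = 0
      rw [gr_d_mk]
      exact (gr_mk_eq_zero S T hS hT hle (l + 1) (L.d l x) (hS l x hx)).2 hdx⟩

end GrLemmas
end Cochain

namespace Cochain
section GrLemmas2
variable {L M : Cochain}
variable (S T : ∀ l, AddSubgroup (L.X l))
  (hS : L.IsSubcomplex S) (hT : L.IsSubcomplex T) (hle : ∀ l, T l ≤ S l)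

theorem gr_castAdd_mk {a b : ℤ} (h : a = b) (y : L.X a) (hy : y ∈ S a) :
    (GrCochain L S T hS hT hle).castAdd h (QuotientAddGroup.mk (⟨y, hy⟩ : (L.sub S hS).X a)) =
      QuotientAddGroup.mk (⟨L.castAdd h y, (castAdd_mem h).2 hy⟩ : (L.sub S hS).X b) := by subst h; rfl

theorem grcls_sub (l : ℤ) (x y : L.X l) (hx : x ∈ S l) (hy : y ∈ S l)
    (hdx : L.d l x ∈ T (l + 1)) (hdy : L.d l y ∈ T (l + 1)) :
    grcls S T hS hT hle l x hx hdx - grcls S T hS hT hle l y hy hdy =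
      grcls S T hS hT hle l (x - y) (sub_mem hx hy)
        (by rw [map_sub]; exact sub_mem hdx hdy) := by
  rfl

theorem grcls_eq_zero_iff (l : ℤ) (x : L.X l) (hx : x ∈ S l) (hdx : L.d l x ∈ T (l + 1)) :
    grcls S T hS hT hle l x hx hdx = 0 ↔
      ∃ u ∈ S (l - 1), x - L.castAdd (show l - 1 + 1 = l by ring) (L.d (l - 1) u) ∈ T l := by
  rw [grcls, Hmk, QuotientAddGroup.mk'_apply, QuotientAddGroup.eq_zero_iff,
    AddSubgroup.mem_addSubgroupOf]
  constructor
  · rintro ⟨w, hw⟩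
    induction w using QuotientAddGroup.induction_on with
    | H w0 =>
      obtain ⟨u, hu⟩ := w0
      refine ⟨u, hu, ?_⟩
      simp only [AddMonoidHom.comp_apply, AddEquiv.coe_toAddMonoidHom] at hw
      have hw2 : (QuotientAddGroup.mk (⟨L.castAdd (show l - 1 + 1 = l by ring) (L.d (l-1) u),
          (castAdd_mem _).2 (hS _ u hu)⟩ : (L.sub S hS).X l) : (GrCochain L S T hS hT hle).X l) =
          QuotientAddGroup.mk (⟨x, hx⟩ : (L.sub S hS).X l) := by
        exact (gr_castAdd_mk S T hS hT hle (show l - 1 + 1 = l by ring) (L.d (l-1) u)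
          (hS _ u hu)).symm.trans hw
      have := (QuotientAddGroup.eq (s := (T l).addSubgroupOf (S l))).1 hw2
      rw [AddSubgroup.mem_addSubgroupOf] at this
      have h2 : x - L.castAdd (show l - 1 + 1 = l by ring) (L.d (l - 1) u)
          = -(L.castAdd (show l - 1 + 1 = l by ring) (L.d (l - 1) u)) + x := by abel
      rw [h2]
      exact this
  · rintro ⟨u, hu, h⟩
    refine ⟨QuotientAddGroup.mk (⟨u, hu⟩ : (L.sub S hS).X (l - 1)), ?_⟩
    simp only [AddMonoidHom.comp_apply, AddEquiv.coe_toAddMonoidHom]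
    show (GrCochain L S T hS hT hle).castAdd (show l - 1 + 1 = l by ring)
        (QuotientAddGroup.mk (⟨L.d (l-1) u, hS _ u hu⟩ : (L.sub S hS).X (l - 1 + 1))) =
        QuotientAddGroup.mk (⟨x, hx⟩ : (L.sub S hS).X l)
    rw [gr_castAdd_mk]
    refine (QuotientAddGroup.eq (s := (T l).addSubgroupOf (S l))).2 ?_
    rw [AddSubgroup.mem_addSubgroupOf]
    have h2 : x - L.castAdd (show l - 1 + 1 = l by ring) (L.d (l - 1) u)
        = -(L.castAdd (show l - 1 + 1 = l by ring) (L.d (l - 1) u)) + x := by abel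
    rw [h2] at h
    exact h

theorem grcls_surj (l : ℤ) (c : (GrCochain L S T hS hT hle).H l) :
    ∃ x, ∃ (hx : x ∈ S l) (hdx : L.d l x ∈ T (l + 1)),
      c = grcls S T hS hT hle l x hx hdx := by
  induction c using QuotientAddGroup.induction_on with
  | H z =>
    obtain ⟨w, hw⟩ := z
    induction w using QuotientAddGroup.induction_on with
    | H w0 =>
      obtain ⟨x, hx⟩ := w0
      have hw' : (GrCochain L S T hS hT hle).d l (QuotientAddGroup.mk (⟨x, hx⟩ : (L.sub S hS).X l)) = 0 := hw
      rw [gr_d_mk] at hw'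
      replace hw' := (gr_mk_eq_zero S T hS hT hle (l + 1) (L.d l x) (hS l x hx)).1 hw'
      exact ⟨x, hx, hw', rfl⟩

end GrLemmas2
end Cochain

namespace Cochain
section GrLemmas3
variable {L M : Cochain}

theorem castAdd_castAdd {a b c : ℤ} (h1 : a = b) (h2 : b = c) (x : L.X a) :
    L.castAdd h2 (L.castAdd h1 x) = L.castAdd (h1.trans h2) x := by subst h1; subst h2; rfl

theorem mem_of_eqIdx {F : ℤ → ∀ l, AddSubgroup (L.X l)} {a b : ℤ} (h : a = b) {l : ℤ}
    {x : L.X l} (hx : x ∈ F a l) : x ∈ F b l := by subst h; exact hx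

theorem mem_decF {F : ℤ → ∀ l, AddSubgroup (L.X l)} {p l : ℤ} {x : L.X l} :
    x ∈ decF L F p l ↔ x ∈ F (p + l) l ∧ L.d l x ∈ F (p + l + 1) (l + 1) := by
  simp [decF, AddSubgroup.mem_inf, AddSubgroup.mem_comap]

theorem grHom_Hmap_grcls (φ : Hom L M) (S T : ∀ l, AddSubgroup (L.X l))
    (S' T' : ∀ l, AddSubgroup (M.X l)) (hS : L.IsSubcomplex S) (hT : L.IsSubcomplex T)
    (hS' : M.IsSubcomplex S') (hT' : M.IsSubcomplex T')
    (hle : ∀ l, T l ≤ S l) (hle' : ∀ l, T' l ≤ S' l)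
    (h1 : ∀ l, ∀ x ∈ S l, φ.f l x ∈ S' l) (h2 : ∀ l, ∀ x ∈ T l, φ.f l x ∈ T' l)
    (l : ℤ) (x : L.X l) (hx : x ∈ S l) (hdx : L.d l x ∈ T (l + 1))
    (hx' : φ.f l x ∈ S' l) (hdx' : M.d l (φ.f l x) ∈ T' (l + 1)) :
    (φ.grHom S T S' T' hS hT hS' hT' hle hle' h1 h2).Hmap l
        (grcls S T hS hT hle l x hx hdx) =
      grcls S' T' hS' hT' hle' l (φ.f l x) hx' hdx' := rfl

end GrLemmas3
end Cochain

namespace Cochain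
theorem grcls_sub' {L : Cochain} (S T : ∀ l, AddSubgroup (L.X l))
    (hS : L.IsSubcomplex S) (hT : L.IsSubcomplex T) (hle : ∀ l, T l ≤ S l)
    (l : ℤ) (x y : L.X l) (hx : x ∈ S l) (hy : y ∈ S l)
    (hdx : L.d l x ∈ T (l + 1)) (hdy : L.d l y ∈ T (l + 1))
    (h1 : x - y ∈ S l) (h2 : L.d l (x - y) ∈ T (l + 1)) :
    grcls S T hS hT hle l (x - y) h1 h2 =
      grcls S T hS hT hle l x hx hdx - grcls S T hS hT hle l y hy hdy := rfl

theorem castAdd_self {L : Cochain} {a : ℤ} (h : a = a) (x : L.X a) :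
    L.castAdd h x = x := rfl
end Cochain


open Cochain

section E1
variable {L M : Cochain} (φ : Cochain.Hom L M)
    (F : ℤ → ∀ l, AddSubgroup (L.X l)) (F' : ℤ → ∀ l, AddSubgroup (M.X l))
    (hdec : ∀ p l, F (p + 1) l ≤ F p l) (hdec' : ∀ p l, F' (p + 1) l ≤ F' p l)
    (hsub : ∀ p, L.IsSubcomplex (F p)) (hsub' : ∀ p, M.IsSubcomplex (F' p))
    (hc : ∀ p l, ∀ x ∈ F p l, φ.f l x ∈ F' p l)
    (hE1 : ∀ p n, Function.Bijective ((φ.grHom (F p) (F (p + 1)) (F' p) (F' (p + 1))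
      (hsub p) (hsub (p + 1)) (hsub' p) (hsub' (p + 1)) (fun l => hdec p l)
      (fun l => hdec' p l) (hc p) (hc (p + 1))).Hmap n))

include hE1 in
theorem E1inj (q n : ℤ) (x : L.X n) (hx : x ∈ F q n) (hdx : L.d n x ∈ F (q + 1) (n + 1))
    (hker : ∃ v ∈ F' q (n - 1),
      φ.f n x - M.castAdd (show n - 1 + 1 = n by ring) (M.d (n - 1) v) ∈ F' (q + 1) n) :
    ∃ u ∈ F q (n - 1),
      x - L.castAdd (show n - 1 + 1 = n by ring) (L.d (n - 1) u) ∈ F (q + 1) n := by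
  obtain ⟨v, hv, hvx⟩ := hker
  have h0 : (φ.grHom (F q) (F (q + 1)) (F' q) (F' (q + 1))
      (hsub q) (hsub (q + 1)) (hsub' q) (hsub' (q + 1)) (fun l => hdec q l)
      (fun l => hdec' q l) (hc q) (hc (q + 1))).Hmap n
      (grcls (F q) (F (q + 1)) (hsub q) (hsub (q + 1)) (fun l => hdec q l) n x hx hdx)
      = 0 := by
    rw [grHom_Hmap_grcls φ _ _ _ _ _ _ _ _ _ _ _ _ n x hx hdx (hc q n x hx)
      (by rw [← φ.comm]; exact hc _ _ _ hdx)]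
    rw [grcls_eq_zero_iff]
    exact ⟨v, hv, hvx⟩
  have h1 := (injective_iff_map_eq_zero _).1 (hE1 q n).1 _ h0
  rwa [grcls_eq_zero_iff] at h1

include hE1 in
theorem E1surj (q n : ℤ) (y : M.X n) (hy : y ∈ F' q n)
    (hdy : M.d n y ∈ F' (q + 1) (n + 1)) :
    ∃ x, x ∈ F q n ∧ L.d n x ∈ F (q + 1) (n + 1) ∧
      ∃ u ∈ F' q (n - 1),
        y - φ.f n x - M.castAdd (show n - 1 + 1 = n by ring) (M.d (n - 1) u)
          ∈ F' (q + 1) n := by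
  obtain ⟨cL, hcL⟩ := (hE1 q n).2
    (grcls (F' q) (F' (q + 1)) (hsub' q) (hsub' (q + 1)) (fun l => hdec' q l) n y hy hdy)
  obtain ⟨x, hx, hdx, rfl⟩ := grcls_surj _ _ _ _ _ n cL
  refine ⟨x, hx, hdx, ?_⟩
  rw [grHom_Hmap_grcls φ _ _ _ _ _ _ _ _ _ _ _ _ n x hx hdx (hc q n x hx)
      (by rw [← φ.comm]; exact hc _ _ _ hdx)] at hcL
  have h0 : grcls (F' q) (F' (q + 1)) (hsub' q) (hsub' (q + 1)) (fun l => hdec' q l) n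
      (φ.f n x - y) (sub_mem (hc q n x hx) hy)
      (by rw [map_sub]; exact sub_mem (by rw [← φ.comm]; exact hc _ _ _ hdx) hdy) = 0 := by
    rw [grcls_sub' (F' q) (F' (q + 1)) (hsub' q) (hsub' (q + 1))
      (fun l => hdec' q l) n (φ.f n x) y (hc q n x hx) hy
      (by rw [← φ.comm]; exact hc _ _ _ hdx) hdy _ _, hcL, sub_self]
  rw [grcls_eq_zero_iff] at h0
  obtain ⟨u, hu, huy⟩ := h0
  refine ⟨-u, neg_mem hu, ?_⟩
  rw [map_neg, map_neg]
  have e : y - φ.f n x - -(M.castAdd (show n - 1 + 1 = n by ring) (M.d (n - 1) u)) =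
      -(φ.f n x - y - M.castAdd (show n - 1 + 1 = n by ring) (M.d (n - 1) u)) := by abel
  rw [e]
  exact neg_mem huy

end E1

open Cochain in
/-- Décalage is functorial and preserves filtered quasi-isomorphisms:
if a filtered map `φ : (L, F) → (M, F)` of finitely filtered cochain complexes induces
isomorphisms on all `E_1`-terms `E_1^{p,q} = H^{p+q}(Gr^p_F)`, then it induces isomorphisms
on all `H^r(Gr^p_{Dec(F)})`. -/
theorem dec_preserves_filtered_quasi_isomorphisms (L M : Cochain) (φ : Cochain.Hom L M)
    (F : ℤ → ∀ l, AddSubgroup (L.X l)) (F' : ℤ → ∀ l, AddSubgroup (M.X l))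
    (hdec : ∀ p l, F (p + 1) l ≤ F p l) (hdec' : ∀ p l, F' (p + 1) l ≤ F' p l)
    (hsub : ∀ p, L.IsSubcomplex (F p)) (hsub' : ∀ p, M.IsSubcomplex (F' p))
    (hfin : ∃ a b : ℤ, (∀ l, F a l = ⊤) ∧ (∀ l, F b l = ⊥))
    (hfin' : ∃ a b : ℤ, (∀ l, F' a l = ⊤) ∧ (∀ l, F' b l = ⊥))
    (hc : ∀ p l, ∀ x ∈ F p l, φ.f l x ∈ F' p l)
    (hE1 : ∀ p n, Function.Bijective ((φ.grHom (F p) (F (p + 1)) (F' p) (F' (p + 1))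
      (hsub p) (hsub (p + 1)) (hsub' p) (hsub' (p + 1)) (fun l => hdec p l)
      (fun l => hdec' p l) (hc p) (hc (p + 1))).Hmap n)) :
    ∀ p r, Function.Bijective ((φ.grHom
      (fun l => decF L F p l) (fun l => decF L F (p + 1) l)
      (fun l => decF M F' p l) (fun l => decF M F' (p + 1) l)
      (decF_isSubcomplex L F p) (decF_isSubcomplex L F (p + 1))
      (decF_isSubcomplex M F' p) (decF_isSubcomplex M F' (p + 1))
      (fun l => decF_mono L F hdec p l) (fun l => decF_mono M F' hdec' p l)
      (decF_compat φ F F' hc p) (decF_compat φ F F' hc (p + 1))).Hmap r) := by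
  intro p r
  have E1i := E1inj φ F F' hdec hdec' hsub hsub' hc hE1
  have E1s := E1surj φ F F' hdec hdec' hsub hsub' hc hE1
  constructor
  · -- injectivity
    rw [injective_iff_map_eq_zero]
    intro c hc0
    obtain ⟨x, hx, hdx, rfl⟩ := grcls_surj _ _ _ _ _ r c
    rw [grHom_Hmap_grcls φ _ _ _ _ _ _ _ _ _ _ _ _ r x hx hdx
      (decF_compat φ F F' hc p r x hx)
      (by rw [← φ.comm]; exact decF_compat φ F F' hc (p + 1) (r + 1) _ hdx),
      grcls_eq_zero_iff] at hc0
    obtain ⟨v, hv, hvx⟩ := hc0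
    obtain ⟨hx1, hx2⟩ := mem_decF.1 hx
    have hdx2 : L.d r x ∈ F (p + r + 2) (r + 1) :=
      mem_of_eqIdx (by ring) (mem_decF.1 hdx).1
    obtain ⟨hv1, hv2⟩ := mem_decF.1 hv
    have hz1 : φ.f r x - M.castAdd (show r - 1 + 1 = r by ring) (M.d (r - 1) v)
        ∈ F' (p + r + 1) r := mem_of_eqIdx (by ring) (mem_decF.1 hvx).1
    -- Step A: apply E1 surjectivity at (p+r-1, r-1) to v
    obtain ⟨a, ha, hda, w, hw, hvw⟩ := E1s (p + r - 1) (r - 1) v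
      (mem_of_eqIdx (by ring) hv1) (mem_of_eqIdx (by ring) hv2)
    -- x' = x - cast (d a)
    have hda' : L.castAdd (show r - 1 + 1 = r by ring) (L.d (r - 1) a) ∈ F (p + r) r :=
      (castAdd_mem _).2 (mem_of_eqIdx (by ring) hda)
    have hx'1 : x - L.castAdd (show r - 1 + 1 = r by ring) (L.d (r - 1) a) ∈ F (p + r) r :=
      sub_mem hx1 hda'
    have hdx'eq : L.d r (x - L.castAdd (show r - 1 + 1 = r by ring) (L.d (r - 1) a))
        = L.d r x := by
      rw [map_sub, d_castAdd, L.dd, map_zero, sub_zero]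
    -- v' = v - φ a - cast (d w)
    have hv'mem : v - φ.f (r - 1) a -
        M.castAdd (show r - 1 - 1 + 1 = r - 1 by ring) (M.d (r - 1 - 1) w)
        ∈ F' (p + r) (r - 1) := mem_of_eqIdx (by ring) hvw
    have hφx' : φ.f r (x - L.castAdd (show r - 1 + 1 = r by ring) (L.d (r - 1) a))
        = φ.f r x - M.castAdd (show r - 1 + 1 = r by ring) (M.d (r - 1) (φ.f (r - 1) a)) := by
      rw [map_sub, φ.cast_natural, φ.comm]
    have hdv' : M.d (r - 1) (v - φ.f (r - 1) a -
        M.castAdd (show r - 1 - 1 + 1 = r - 1 by ring) (M.d (r - 1 - 1) w))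
        = M.d (r - 1) v - M.d (r - 1) (φ.f (r - 1) a) := by
      rw [map_sub, map_sub, d_castAdd, M.dd, map_zero, sub_zero]
    -- Step B: apply E1 injectivity at (p+r, r) to x'
    obtain ⟨b, hb, hxb⟩ := E1i (p + r) r
      (x - L.castAdd (show r - 1 + 1 = r by ring) (L.d (r - 1) a)) hx'1
      (by rw [hdx'eq]; exact hdec (p + r + 1) (r + 1) (mem_of_eqIdx (by ring) hdx2))
      ⟨v - φ.f (r - 1) a -
        M.castAdd (show r - 1 - 1 + 1 = r - 1 by ring) (M.d (r - 1 - 1) w), hv'mem, by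
        rw [hφx', hdv', map_sub]
        have e : φ.f r x -
            M.castAdd (show r - 1 + 1 = r by ring) (M.d (r - 1) (φ.f (r - 1) a)) -
            (M.castAdd (show r - 1 + 1 = r by ring) (M.d (r - 1) v) -
              M.castAdd (show r - 1 + 1 = r by ring) (M.d (r - 1) (φ.f (r - 1) a)))
            = φ.f r x - M.castAdd (show r - 1 + 1 = r by ring) (M.d (r - 1) v) := by abel
        rw [e]
        exact hz1⟩
    -- conclude
    rw [grcls_eq_zero_iff]
    refine ⟨a + b, ?_, ?_⟩
    · refine mem_decF.2 ⟨?_, ?_⟩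
      · exact add_mem (mem_of_eqIdx (by ring) ha)
          (hdec (p + (r - 1)) (r - 1) (mem_of_eqIdx (by ring) hb))
      · rw [map_add]
        exact add_mem (mem_of_eqIdx (by ring) hda)
          (mem_of_eqIdx (by ring) (hsub (p + r) (r - 1) b hb))
    · have hsplit : x - L.castAdd (show r - 1 + 1 = r by ring) (L.d (r - 1) (a + b))
          = (x - L.castAdd (show r - 1 + 1 = r by ring) (L.d (r - 1) a)) -
            L.castAdd (show r - 1 + 1 = r by ring) (L.d (r - 1) b) := by
        rw [map_add, map_add]; abel
      refine mem_decF.2 ⟨?_, ?_⟩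
      · rw [hsplit]
        exact mem_of_eqIdx (by ring) hxb
      · have hd0 : L.d r (x - L.castAdd (show r - 1 + 1 = r by ring) (L.d (r - 1) (a + b)))
            = L.d r x := by
          rw [map_sub, d_castAdd, L.dd, map_zero, sub_zero]
        rw [hd0]
        exact mem_of_eqIdx (by ring) hdx2
  · -- surjectivity
    intro c'
    obtain ⟨y, hy, hdy, rfl⟩ := grcls_surj _ _ _ _ _ r c'
    obtain ⟨hy1, hy2⟩ := mem_decF.1 hy
    have hdy2 : M.d r y ∈ F' (p + r + 2) (r + 1) :=
      mem_of_eqIdx (by ring) (mem_decF.1 hdy).1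
    -- Step 1: E1 surjectivity at (p+r, r) applied to y
    obtain ⟨x0, hx0, hdx0, u, hu, hy1'⟩ := E1s (p + r) r y hy1 hy2
    -- Step 2: E1 injectivity at (p+r+1, r+1) applied to d x0
    have hveq : φ.f (r + 1) (L.d r x0) - M.castAdd (show r + 1 - 1 + 1 = r + 1 by ring)
        (M.d (r + 1 - 1) (M.castAdd (show r = r + 1 - 1 by ring)
          (-(y - φ.f r x0 - M.castAdd (show r - 1 + 1 = r by ring) (M.d (r - 1) u)))))
        = M.d r y := by
      rw [d_castAdd, castAdd_castAdd, castAdd_self, map_neg, map_sub, map_sub,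
        d_castAdd, M.dd, map_zero, sub_zero, ← φ.comm]
      abel
    obtain ⟨c0, hc0m, hcx⟩ := E1i (p + r + 1) (r + 1) (L.d r x0) hdx0
      (by rw [L.dd]; exact zero_mem _)
      ⟨M.castAdd (show r = r + 1 - 1 by ring)
        (-(y - φ.f r x0 - M.castAdd (show r - 1 + 1 = r by ring) (M.d (r - 1) u))),
        (castAdd_mem _).2 (neg_mem (mem_of_eqIdx (by ring) hy1')), by
          rw [hveq]; exact mem_of_eqIdx (by ring) hdy2⟩
    -- x = x0 - cast c0
    have hc'm : L.castAdd (show r + 1 - 1 = r by ring) c0 ∈ F (p + r + 1) r :=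
      (castAdd_mem _).2 hc0m
    have hdx2' : L.d r (x0 - L.castAdd (show r + 1 - 1 = r by ring) c0)
        ∈ F (p + r + 2) (r + 1) := by
      rw [map_sub, d_castAdd]
      exact mem_of_eqIdx (by ring) hcx
    have hxm : x0 - L.castAdd (show r + 1 - 1 = r by ring) c0 ∈ F (p + r) r :=
      sub_mem hx0 (hdec (p + r) r hc'm)
    have hdxm : L.d r (x0 - L.castAdd (show r + 1 - 1 = r by ring) c0)
        ∈ F (p + r + 1) (r + 1) := hdec (p + r + 1) (r + 1) (mem_of_eqIdx (by ring) hdx2')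
    refine ⟨grcls _ _ _ _ _ r (x0 - L.castAdd (show r + 1 - 1 = r by ring) c0)
      (mem_decF.2 ⟨hxm, hdxm⟩)
      (mem_decF.2 ⟨mem_of_eqIdx (by ring) hdx2', by rw [L.dd]; exact zero_mem _⟩), ?_⟩
    rw [grHom_Hmap_grcls φ _ _ _ _ _ _ _ _ _ _ _ _ r _ _ _
      (decF_compat φ F F' hc p r _ (mem_decF.2 ⟨hxm, hdxm⟩))
      (by rw [← φ.comm]
          exact decF_compat φ F F' hc (p + 1) (r + 1) _
            (mem_decF.2 ⟨mem_of_eqIdx (by ring) hdx2', by rw [L.dd]; exact zero_mem _⟩))]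
    rw [← sub_eq_zero, ← grcls_sub' _ _ _ _ _ r _ y
      (decF_compat φ F F' hc p r _ (mem_decF.2 ⟨hxm, hdxm⟩)) hy
      (by rw [← φ.comm]
          exact decF_compat φ F F' hc (p + 1) (r + 1) _
            (mem_decF.2 ⟨mem_of_eqIdx (by ring) hdx2', by rw [L.dd]; exact zero_mem _⟩)) hdy
      (sub_mem (decF_compat φ F F' hc p r _ (mem_decF.2 ⟨hxm, hdxm⟩)) hy)
      (by rw [map_sub]
          exact sub_mem (by
            rw [← φ.comm]
            exact decF_compat φ F F' hc (p + 1) (r + 1) _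
              (mem_decF.2 ⟨mem_of_eqIdx (by ring) hdx2', by rw [L.dd]; exact zero_mem _⟩))
            hdy),
      grcls_eq_zero_iff]
    refine ⟨-u, ?_, ?_⟩
    · refine mem_decF.2 ⟨?_, ?_⟩
      · exact neg_mem (hdec' (p + (r - 1)) (r - 1) (mem_of_eqIdx (by ring) hu))
      · rw [map_neg]
        exact neg_mem (mem_of_eqIdx (by ring) (hsub' (p + r) (r - 1) u hu))
    · have hexp : φ.f r (x0 - L.castAdd (show r + 1 - 1 = r by ring) c0) - y -
          M.castAdd (show r - 1 + 1 = r by ring) (M.d (r - 1) (-u))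
          = -(y - φ.f r x0 - M.castAdd (show r - 1 + 1 = r by ring) (M.d (r - 1) u))
            - φ.f r (L.castAdd (show r + 1 - 1 = r by ring) c0) := by
        rw [map_sub, map_neg, map_neg]; abel
      refine mem_decF.2 ⟨?_, ?_⟩
      · rw [hexp]
        exact sub_mem (neg_mem (mem_of_eqIdx (by ring) hy1'))
          (mem_of_eqIdx (by ring) (hc (p + r + 1) r _ hc'm))
      · have hdexp : M.d r (φ.f r (x0 - L.castAdd (show r + 1 - 1 = r by ring) c0) - y -
            M.castAdd (show r - 1 + 1 = r by ring) (M.d (r - 1) (-u)))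
            = φ.f (r + 1) (L.d r (x0 - L.castAdd (show r + 1 - 1 = r by ring) c0))
              - M.d r y := by
          rw [map_sub, map_sub, d_castAdd, M.dd, map_zero, sub_zero, ← φ.comm]
        rw [hdexp]
        exact sub_mem (mem_of_eqIdx (by ring) (hc (p + r + 2) (r + 1) _ hdx2'))
          (mem_of_eqIdx (by ring) hdy2)
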